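/- arXiv:math/0204300 — 3 statements merged into one kernel-verified Lean document; each statement's English description precedes it below -/
import Mathlib

section
/- The standard right orthonormal Laurent polynomials χ_n and their substar conjugates χ_{n*} satisfy, as identities in ℂ[z, z^{−1}]: (i) for every n ≥ 1, ρ_{2n}·χ_{2n} = conj(a_{2n})·χ_{2n−1} + χ_{2n−1,*} and ρ_{2n}·χ_{2n,*} = χ_{2n−1} + a_{2n}·χ_{2n−1,*}; (ii) for every n ≥ 1, χ_{2n−1} = −a_{2n}·χ_{2n−1,*} + ρ_{2n}·χ_{2n,*} and χ_{2n} = ρ̂_{2n}·χ_{2n−1,*} + conj(a_{2n})·χ_{2n,*}; (iii) for every n ≥ 0, z·χ_{2n,*} = −a_{2n+1}·χ_{2n} + ρ_{2n+1}·χ_{2n+1} and z·χ_{2n+1,*} = ρ̂_{2n+1}·χ_{2n} + conj(a_{2n+1})·χ_{2n+1}. -/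
open LaurentPolynomial Polynomial Complex ComplexConjugate

noncomputable section

/-- Reversed polynomial with conjugated coefficients: p*(z) = Σ conj(c_{m-k}) z^k. -/
def revc (p : Polynomial ℂ) : Polynomial ℂ := (p.map (starRingEnd ℂ)).reverse

/-- Monic orthogonal polynomials from Schur parameters: φ_0 = 1,
φ_n = z φ_{n-1} + a_n φ*_{n-1}. -/
def phi (a : ℕ → ℂ) : ℕ → Polynomial ℂ
  | 0 => 1
  | n + 1 => X * phi a n + Polynomial.C (a (n + 1)) * revc (phi a n)

/-- ρ_n := |1 - |a_n|²|^{1/2}. -/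
def rho (a : ℕ → ℂ) (n : ℕ) : ℝ := Real.sqrt |1 - ‖a n‖ ^ 2|

/-- ε_n := sgn (1 - |a_n|²). -/
def sgn (a : ℕ → ℂ) (n : ℕ) : ℝ := Real.sign (1 - ‖a n‖ ^ 2)

/-- ρ̂_n := ε_n ρ_n. -/
def rhoh (a : ℕ → ℂ) (n : ℕ) : ℝ := sgn a n * rho a n

/-- κ_n := Π_{k=1}^n ρ_k⁻¹ (κ_0 = 1). -/
def kap (a : ℕ → ℂ) (n : ℕ) : ℝ := ∏ k ∈ Finset.Icc 1 n, (rho a k)⁻¹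

/-- e_n := Π_{k=1}^n ε_k (e_0 = 1). -/
def esgn (a : ℕ → ℂ) (n : ℕ) : ℝ := ∏ k ∈ Finset.Icc 1 n, sgn a k

/-- Orthonormal polynomials φ̂_n := κ_n φ_n. -/
def phin (a : ℕ → ℂ) (n : ℕ) : Polynomial ℂ := Polynomial.C ((kap a n : ℝ) : ℂ) * phi a n

/-- Standard right orthonormal Laurent polynomials:
χ_{2m} = z^{-m} φ̂*_{2m}, χ_{2m+1} = z^{-m} φ̂_{2m+1}. -/
def chi (a : ℕ → ℂ) (n : ℕ) : LaurentPolynomial ℂ :=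
  T (-((n / 2 : ℕ) : ℤ)) * (if Even n then revc (phin a n) else phin a n).toLaurent

/-- The kernel K_n(z,y) := Σ_{k=0}^n e_k φ̂_k(z) conj(φ̂_k(y)). -/
def Kker (a : ℕ → ℂ) (n : ℕ) (z y : ℂ) : ℂ :=
  ∑ k ∈ Finset.range (n + 1),
    ((esgn a k : ℝ) : ℂ) * (phin a k).eval z * conj ((phin a k).eval y)

/-- Entries of the five-diagonal matrix, with rows/columns indexed from 1. -/
def Fent (a : ℕ → ℂ) (i j : ℕ) : ℂ :=
  if i = 1 then
    if j = 1 then -a 1 else if j = 2 then (rho a 1 : ℂ) else 0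
  else if i % 2 = 0 then
    if j + 1 = i then -(rhoh a (i - 1) : ℂ) * a i
    else if j = i then -conj (a (i - 1)) * a i
    else if j = i + 1 then -(rho a i : ℂ) * a (i + 1)
    else if j = i + 2 then (rho a i : ℂ) * (rho a (i + 1) : ℂ)
    else 0
  else
    if j + 2 = i then (rhoh a (i - 2) : ℂ) * (rhoh a (i - 1) : ℂ)
    else if j + 1 = i then conj (a (i - 2)) * (rhoh a (i - 1) : ℂ)
    else if j = i then -conj (a (i - 1)) * a i
    else if j = i + 1 then conj (a (i - 1)) * (rho a i : ℂ)
    else 0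

/-- The n×n five-diagonal matrix ℱ_n. -/
def Fmat (a : ℕ → ℂ) (n : ℕ) : Matrix (Fin n) (Fin n) ℂ :=
  Matrix.of fun i j => Fent a (i.val + 1) (j.val + 1)

/-- Evaluation of a Laurent polynomial at a nonzero complex number. -/
def levalAt (z : ℂ) (f : LaurentPolynomial ℂ) : ℂ :=
  Finsupp.sum (AddMonoidAlgebra.coeff f) fun k c => c * z ^ k

/-- Substar conjugate of a Laurent polynomial: f_*(z) = Σ conj(c_k) z^{-k}. -/
def substar (f : LaurentPolynomial ℂ) : LaurentPolynomial ℂ :=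
  AddMonoidAlgebra.ofCoeff
    (Finsupp.mapRange (starRingEnd ℂ) (map_zero _) (AddMonoidAlgebra.coeff (LaurentPolynomial.invert f)))

lemma substar_apply (f : LaurentPolynomial ℂ) (k : ℤ) :
    (substar f).coeff k = conj (f.coeff (-k)) := by
  rw [substar, AddMonoidAlgebra.coeff_ofCoeff, Finsupp.mapRange_apply, invert_apply]

lemma T_mul_apply (n k : ℤ) (f : LaurentPolynomial ℂ) :
    ((T n * f : LaurentPolynomial ℂ)).coeff k = f.coeff (k - n) := by
  have := AddMonoidAlgebra.coeff_single_mul_apply f (1 : ℂ) n k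
  rw [show (T n : LaurentPolynomial ℂ) = AddMonoidAlgebra.single n 1 from rfl, this, one_mul,
    neg_add_eq_sub]

lemma toLaurent_coeff (p : Polynomial ℂ) (k : ℤ) :
    (p.toLaurent).coeff k = if 0 ≤ k then p.coeff k.toNat else 0 := by
  rw [Polynomial.toLaurent_apply, AddMonoidAlgebra.mapDomain, AddMonoidAlgebra.coeff_ofCoeff]
  rcases le_or_gt 0 k with h | h
  · obtain ⟨m, rfl⟩ := Int.eq_ofNat_of_zero_le h
    rw [if_pos h, Finsupp.mapDomain_apply Nat.cast_injective]
    simp [Polynomial.toFinsupp_apply]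
  · rw [Finsupp.mapDomain_notin_range, if_neg h.not_ge]
    rintro ⟨m, rfl⟩
    omega

lemma substar_add (f g : LaurentPolynomial ℂ) :
    substar (f + g) = substar f + substar g := by
  ext k
  rw [substar_apply]
  rw [AddMonoidAlgebra.coeff_add, AddMonoidAlgebra.coeff_add, Finsupp.add_apply, Finsupp.add_apply]
  rw [map_add, substar_apply, substar_apply]

lemma substar_smul (c : ℂ) (f : LaurentPolynomial ℂ) :
    substar (c • f) = conj c • substar f := by
  ext k
  rw [substar_apply]
  rw [AddMonoidAlgebra.coeff_smul_apply, AddMonoidAlgebra.coeff_smul_apply]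
  rw [smul_eq_mul, smul_eq_mul, map_mul, substar_apply]

lemma substar_T_mul (n : ℤ) (f : LaurentPolynomial ℂ) :
    substar (T n * f) = T (-n) * substar f := by
  ext k
  rw [T_mul_apply, substar_apply, substar_apply, T_mul_apply]
  ring_nf

lemma substar_substar (f : LaurentPolynomial ℂ) : substar (substar f) = f := by
  ext k; simp [substar_apply]

lemma substar_one : substar (1 : LaurentPolynomial ℂ) = 1 := by
  ext k
  rw [substar_apply, show (1 : LaurentPolynomial ℂ) = T 0 from (T_zero).symm,
    T_apply, T_apply]
  simp only [eq_comm (a := (0:ℤ)), neg_eq_zero]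
  split <;> simp

lemma toLaurent_revc (p : Polynomial ℂ) :
    (revc p).toLaurent = T (p.natDegree : ℤ) * substar p.toLaurent := by
  have hN : (p.map (starRingEnd ℂ)).natDegree = p.natDegree := natDegree_map _
  ext k
  rw [T_mul_apply, substar_apply, neg_sub, toLaurent_coeff, toLaurent_coeff]
  by_cases hk : 0 ≤ k
  · rw [if_pos hk]
    rw [show (revc p).coeff k.toNat
        = conj (p.coeff (revAt p.natDegree k.toNat)) by
      simp [revc, Polynomial.reverse, coeff_reflect, hN, coeff_map]]
    by_cases hkN : k ≤ (p.natDegree : ℤ)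
    · rw [if_pos (by omega), revAt_le (by omega)]
      congr 2
      omega
    · rw [if_neg (by omega), revAt_eq_self_of_lt (by omega),
        coeff_eq_zero_of_natDegree_lt (by omega), map_zero]
  · rw [if_neg hk, if_pos (by omega),
      coeff_eq_zero_of_natDegree_lt (by omega), map_zero]

lemma phi_deg (a : ℕ → ℂ) : ∀ n, (phi a n).Monic ∧ (phi a n).natDegree = n := by
  intro n
  induction n with
  | zero => exact ⟨monic_one, natDegree_one⟩
  | succ n ih =>
    obtain ⟨hm, hd⟩ := ih
    have h1 : (X * phi a n).Monic := monic_X.mul hm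
    have hd1 : (X * phi a n).natDegree = n + 1 := by
      rw [monic_X.natDegree_mul hm, natDegree_X, hd, add_comm]
    have hrev : (revc (phi a n)).natDegree ≤ n := by
      refine le_trans (reverse_natDegree_le _) ?_
      rw [natDegree_map, hd]
    have hq : (Polynomial.C (a (n + 1)) * revc (phi a n)).degree < (X * phi a n).degree := by
      have h2 : (Polynomial.C (a (n + 1)) * revc (phi a n)).degree ≤ ((n : ℕ) : WithBot ℕ) :=
        degree_le_natDegree.trans
          (by exact_mod_cast (natDegree_C_mul_le _ _).trans hrev)
      have h3 : (X * phi a n).degree = ((n + 1 : ℕ) : WithBot ℕ) := by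
        rw [degree_eq_natDegree h1.ne_zero, hd1]
      rw [h3]
      exact lt_of_le_of_lt h2 (by exact_mod_cast Nat.lt_succ_self n)
    refine ⟨h1.add_of_left hq, ?_⟩
    rw [phi, natDegree_add_eq_left_of_degree_lt hq, hd1]

lemma C_mul_laurent (c : ℂ) (f : LaurentPolynomial ℂ) :
    LaurentPolynomial.C c * f = c • f := by
  rw [Algebra.smul_def, ← LaurentPolynomial.C_eq_algebraMap]

lemma toLaurent_C_mul (c : ℂ) (p : Polynomial ℂ) :
    (Polynomial.C c * p).toLaurent = c • p.toLaurent := by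
  rw [map_mul, Polynomial.toLaurent_C, C_mul_laurent]

section Main

variable (a : ℕ → ℂ)

/-- Laurent version of `phi`. -/
def PhiL (n : ℕ) : LaurentPolynomial ℂ := (phi a n).toLaurent

/-- Laurent version of `revc (phi)`. -/
def RL (n : ℕ) : LaurentPolynomial ℂ := (revc (phi a n)).toLaurent

lemma rec1 (n : ℕ) : PhiL a (n + 1) = T 1 * PhiL a n + a (n + 1) • RL a n := by
  rw [PhiL, phi, map_add, map_mul, Polynomial.toLaurent_X, toLaurent_C_mul]
  rfl

lemma keyR (n : ℕ) : RL a n = T (n : ℤ) * substar (PhiL a n) := by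
  rw [RL, toLaurent_revc, (phi_deg a n).2, PhiL]

lemma keyP (n : ℕ) : substar (PhiL a n) = T (-(n : ℤ)) * RL a n := by
  rw [keyR, ← mul_assoc, ← T_add, neg_add_cancel, T_zero, one_mul]

lemma keyRS (n : ℕ) : substar (RL a n) = T (-(n : ℤ)) * PhiL a n := by
  rw [keyR, substar_T_mul, substar_substar]

lemma rec2 (n : ℕ) : RL a (n + 1) = conj (a (n + 1)) • (T 1 * PhiL a n) + RL a n := by
  have h := congrArg substar (rec1 a n)
  rw [substar_add, substar_T_mul, substar_smul, keyP, keyP, keyRS] at h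
  have h2 := congrArg (fun x => T ((n : ℤ) + 1) * x) h
  rw [show (-(((n : ℕ) + 1 : ℕ) : ℤ)) = -((n : ℤ) + 1) by push_cast; ring] at h2
  rw [← mul_assoc, ← T_add, add_neg_cancel, T_zero, one_mul] at h2
  rw [h2, mul_add, mul_smul_comm]
  simp only [← mul_assoc, ← T_add]
  rw [show ((n:ℤ) + 1 + (-1 + -(n:ℤ))) = 0 by ring, show ((n:ℤ) + 1 + -(n:ℤ)) = 1 by ring,
    T_zero, one_mul]
  ring


variable (ha : ∀ n, 1 ≤ n → ‖a n‖ ≠ 1)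

include ha

lemma rho_pos (n : ℕ) (hn : 1 ≤ n) : 0 < rho a n := by
  rw [rho, Real.sqrt_pos]
  rw [abs_pos, sub_ne_zero]
  intro h
  apply ha n hn
  have h0 := norm_nonneg (a n)
  have h2 : (‖a n‖ - 1) * (‖a n‖ + 1) = 0 := by nlinarith
  rcases mul_eq_zero.mp h2 with h3 | h3
  · linarith
  · linarith

lemma kap_pos (n : ℕ) : 0 < kap a n := by
  rw [kap]
  apply Finset.prod_pos
  intro k hk
  exact inv_pos.mpr (rho_pos a ha k (Finset.mem_Icc.mp hk).1)

lemma rho_mul_kap (n : ℕ) : rho a (n + 1) * kap a (n + 1) = kap a n := by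
  rw [kap, kap, Finset.prod_Icc_succ_top (Nat.le_add_left 1 n), ← mul_assoc,
    mul_comm (rho a (n+1)), mul_assoc, mul_inv_cancel₀ (rho_pos a ha (n+1) (Nat.le_add_left 1 n)).ne',
    mul_one]

lemma kC_succ (n : ℕ) :
    ((rho a (n + 1) : ℝ) : ℂ) * ((kap a (n + 1) : ℝ) : ℂ) = ((kap a n : ℝ) : ℂ) := by
  rw [← Complex.ofReal_mul, rho_mul_kap a ha]

omit ha

lemma rhoh_mul_rho (n : ℕ) :
    ((rhoh a n : ℝ) : ℂ) * ((rho a n : ℝ) : ℂ) = ((1 - ‖a n‖ ^ 2 : ℝ) : ℂ) := by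
  rw [← Complex.ofReal_mul]
  congr 1
  have hs : ∀ x : ℝ, Real.sign x * |x| = x := by
    intro x
    rcases lt_trichotomy x 0 with h | h | h
    · rw [Real.sign_of_neg h, abs_of_neg h]; ring
    · simp [h]
    · rw [Real.sign_of_pos h, abs_of_pos h]; ring
  rw [rhoh, mul_assoc, rho, Real.mul_self_sqrt (abs_nonneg _), sgn, hs]

lemma revc_C_mul (c : ℂ) (hc : c ≠ 0) (p : Polynomial ℂ) :
    revc (Polynomial.C c * p) = Polynomial.C (conj c) * revc p := by
  unfold revc
  rw [Polynomial.map_mul, map_C, Polynomial.reverse, Polynomial.reverse,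
    natDegree_C_mul (by simpa using hc), reflect_C_mul]

include ha

lemma chi_even (m : ℕ) :
    chi a (2 * m) = ((kap a (2 * m) : ℝ) : ℂ) • (T (-(m : ℤ)) * RL a (2 * m)) := by
  rw [chi, if_pos (even_two_mul m), Nat.mul_div_cancel_left m (by norm_num), phin,
    revc_C_mul _ (by exact_mod_cast (kap_pos a ha (2*m)).ne') _, Complex.conj_ofReal,
    toLaurent_C_mul, mul_smul_comm, RL]

omit ha in
lemma chi_odd (m : ℕ) :
    chi a (2 * m + 1)
      = ((kap a (2 * m + 1) : ℝ) : ℂ) • (T (-(m : ℤ)) * PhiL a (2 * m + 1)) := by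
  rw [chi, if_neg (by simp [Nat.even_add_one, Nat.even_mul]), phin, toLaurent_C_mul,
    mul_smul_comm, PhiL]
  congr 3
  omega

lemma schi_even (m : ℕ) :
    substar (chi a (2 * m))
      = ((kap a (2 * m) : ℝ) : ℂ) • (T (-(m : ℤ)) * PhiL a (2 * m)) := by
  rw [chi_even a ha, substar_smul, Complex.conj_ofReal, substar_T_mul, keyRS, neg_neg,
    ← mul_assoc, ← T_add]
  congr 3
  push_cast
  ring

omit ha in
lemma schi_odd (m : ℕ) :
    substar (chi a (2 * m + 1))
      = ((kap a (2 * m + 1) : ℝ) : ℂ) • (T (-((m : ℤ) + 1)) * RL a (2 * m + 1)) := by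
  rw [chi_odd a m, substar_smul, Complex.conj_ofReal, substar_T_mul, keyP, neg_neg,
    ← mul_assoc, ← T_add]
  congr 3
  push_cast
  ring


omit ha in
lemma conj_mul_self (z : ℂ) :
    conj z * z = ((‖z‖ ^ 2 : ℝ) : ℂ) := by
  rw [mul_comm, Complex.mul_conj]
  norm_cast
  exact (Complex.sq_norm z).symm

lemma hscal_gen (k : ℕ) :
    ((kap a (k + 1) : ℝ) : ℂ)
      = ((rhoh a (k + 1) : ℝ) : ℂ) * ((kap a k : ℝ) : ℂ)
        + conj (a (k + 1)) * a (k + 1) * ((kap a (k + 1) : ℝ) : ℂ) := by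
  rw [← kC_succ a ha k]
  have h1 := rhoh_mul_rho a (k + 1)
  push_cast at h1
  have h2 := conj_mul_self (a (k + 1))
  push_cast at h2
  linear_combination (-((kap a (k+1) : ℝ) : ℂ)) * h1 + (-((kap a (k+1) : ℝ) : ℂ)) * h2

lemma main_ia (m : ℕ) :
    ((rho a (2 * (m + 1)) : ℝ) : ℂ) • chi a (2 * (m + 1)) =
      conj (a (2 * (m + 1))) • chi a (2 * m + 1) + substar (chi a (2 * m + 1)) := by
  have hc2 := chi_even a ha (m + 1)
  push_cast at hc2
  have hc1 := chi_odd a m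
  have hs1 := schi_odd a m
  have hrec : RL a (2 * (m + 1))
      = conj (a (2 * (m + 1))) • (T 1 * PhiL a (2 * m + 1)) + RL a (2 * m + 1) :=
    rec2 a (2 * m + 1)
  have hT : (T (-(m : ℤ)) : LaurentPolynomial ℂ) = T (-((m : ℤ) + 1)) * T 1 := by
    rw [← T_add]; congr 1; ring
  have hkC : (LaurentPolynomial.C ((rho a (2 * (m + 1)) : ℝ) : ℂ))
        * LaurentPolynomial.C ((kap a (2 * (m + 1)) : ℝ) : ℂ)
      = LaurentPolynomial.C ((kap a (2 * m + 1) : ℝ) : ℂ) := by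
    rw [← map_mul]
    exact congrArg LaurentPolynomial.C (kC_succ a ha (2 * m + 1))
  rw [hc2, hs1, hc1]
  simp only [← C_mul_laurent] at hrec ⊢
  rw [hrec, hT, ← hkC]
  ring

lemma main_ib (m : ℕ) :
    ((rho a (2 * (m + 1)) : ℝ) : ℂ) • substar (chi a (2 * (m + 1))) =
      chi a (2 * m + 1) + a (2 * (m + 1)) • substar (chi a (2 * m + 1)) := by
  have hc2 := schi_even a ha (m + 1)
  push_cast at hc2
  have hc1 := chi_odd a m
  have hs1 := schi_odd a m
  have hrec : PhiL a (2 * (m + 1))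
      = T 1 * PhiL a (2 * m + 1) + a (2 * (m + 1)) • RL a (2 * m + 1) :=
    rec1 a (2 * m + 1)
  have hT : (T (-(m : ℤ)) : LaurentPolynomial ℂ) = T (-((m : ℤ) + 1)) * T 1 := by
    rw [← T_add]; congr 1; ring
  have hkC : (LaurentPolynomial.C ((rho a (2 * (m + 1)) : ℝ) : ℂ))
        * LaurentPolynomial.C ((kap a (2 * (m + 1)) : ℝ) : ℂ)
      = LaurentPolynomial.C ((kap a (2 * m + 1) : ℝ) : ℂ) := by
    rw [← map_mul]
    exact congrArg LaurentPolynomial.C (kC_succ a ha (2 * m + 1))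
  rw [hc2, hs1, hc1]
  simp only [← C_mul_laurent] at hrec ⊢
  rw [hrec, hT, ← hkC]
  ring

lemma main_iia (m : ℕ) :
    chi a (2 * m + 1) =
      (-a (2 * (m + 1))) • substar (chi a (2 * m + 1)) +
        ((rho a (2 * (m + 1)) : ℝ) : ℂ) • substar (chi a (2 * (m + 1))) := by
  rw [main_ib a ha m]
  module

lemma main_iib (m : ℕ) :
    chi a (2 * (m + 1)) =
      ((rhoh a (2 * (m + 1)) : ℝ) : ℂ) • substar (chi a (2 * m + 1)) +
        conj (a (2 * (m + 1))) • substar (chi a (2 * (m + 1))) := by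
  have hρ : ((rho a (2 * (m + 1)) : ℝ) : ℂ) ≠ 0 := by
    exact_mod_cast (rho_pos a ha (2 * (m + 1)) (by omega)).ne'
  have key : ((rho a (2 * (m + 1)) : ℝ) : ℂ) • chi a (2 * (m + 1))
      = ((rho a (2 * (m + 1)) : ℝ) : ℂ) •
        (((rhoh a (2 * (m + 1)) : ℝ) : ℂ) • substar (chi a (2 * m + 1)) +
          conj (a (2 * (m + 1))) • substar (chi a (2 * (m + 1)))) := by
    have hc2 := chi_even a ha (m + 1)
    push_cast at hc2
    have hsc2 := schi_even a ha (m + 1)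
    push_cast at hsc2
    have hs1 := schi_odd a m
    have hrec2 : RL a (2 * (m + 1))
        = conj (a (2 * (m + 1))) • (T 1 * PhiL a (2 * m + 1)) + RL a (2 * m + 1) :=
      rec2 a (2 * m + 1)
    have hrec1 : PhiL a (2 * (m + 1))
        = T 1 * PhiL a (2 * m + 1) + a (2 * (m + 1)) • RL a (2 * m + 1) :=
      rec1 a (2 * m + 1)
    have hscal : ((kap a (2 * (m + 1)) : ℝ) : ℂ)
        = ((rhoh a (2 * (m + 1)) : ℝ) : ℂ) * ((kap a (2 * m + 1) : ℝ) : ℂ)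
          + conj (a (2 * (m + 1))) * a (2 * (m + 1)) * ((kap a (2 * (m + 1)) : ℝ) : ℂ) :=
      hscal_gen a ha (2 * m + 1)
    have hscalC := congrArg (LaurentPolynomial.C (R := ℂ)) hscal
    simp only [map_add, map_mul] at hscalC
    rw [hsc2, hs1, hc2]
    simp only [← C_mul_laurent] at hrec1 hrec2 ⊢
    rw [hrec1, hrec2]
    linear_combination (T (-((m : ℤ) + 1)) * RL a (2 * m + 1)
      * LaurentPolynomial.C ((rho a (2 * (m + 1)) : ℝ) : ℂ)) * hscalC
  exact smul_right_injective (LaurentPolynomial ℂ) hρ key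

lemma main_iiia (n : ℕ) :
    T 1 * substar (chi a (2 * n)) =
      (-a (2 * n + 1)) • chi a (2 * n) +
        ((rho a (2 * n + 1) : ℝ) : ℂ) • chi a (2 * n + 1) := by
  have hse := schi_even a ha n
  have hce := chi_even a ha n
  have hco := chi_odd a n
  have hrec : PhiL a (2 * n + 1) = T 1 * PhiL a (2 * n) + a (2 * n + 1) • RL a (2 * n) :=
    rec1 a (2 * n)
  have hkC : (LaurentPolynomial.C ((rho a (2 * n + 1) : ℝ) : ℂ))
        * LaurentPolynomial.C ((kap a (2 * n + 1) : ℝ) : ℂ)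
      = LaurentPolynomial.C ((kap a (2 * n) : ℝ) : ℂ) := by
    rw [← map_mul]
    exact congrArg LaurentPolynomial.C (kC_succ a ha (2 * n))
  rw [hse, hce, hco]
  simp only [← C_mul_laurent, map_neg] at hrec ⊢
  rw [hrec, ← hkC]
  ring

lemma main_iiib (n : ℕ) :
    T 1 * substar (chi a (2 * n + 1)) =
      ((rhoh a (2 * n + 1) : ℝ) : ℂ) • chi a (2 * n) +
        conj (a (2 * n + 1)) • chi a (2 * n + 1) := by
  have hso := schi_odd a n
  have hce := chi_even a ha n
  have hco := chi_odd a n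
  have hrec2 : RL a (2 * n + 1)
      = conj (a (2 * n + 1)) • (T 1 * PhiL a (2 * n)) + RL a (2 * n) :=
    rec2 a (2 * n)
  have hrec1 : PhiL a (2 * n + 1) = T 1 * PhiL a (2 * n) + a (2 * n + 1) • RL a (2 * n) :=
    rec1 a (2 * n)
  have hT : (T (-(n : ℤ)) : LaurentPolynomial ℂ) = T (-((n : ℤ) + 1)) * T 1 := by
    rw [← T_add]; congr 1; ring
  have hscal := hscal_gen a ha (2 * n)
  have hscalC := congrArg (LaurentPolynomial.C (R := ℂ)) hscal
  simp only [map_add, map_mul] at hscalC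
  rw [hso, hce, hco, hT]
  simp only [← C_mul_laurent] at hrec1 hrec2 ⊢
  rw [hrec1, hrec2]
  linear_combination (T (-((n : ℤ) + 1)) * T 1 * RL a (2 * n)) * hscalC

end Main


/-- Proposition 2.3: relations between the standard right orthonormal
Laurent polynomials χ_n and their substar conjugates χ_{n*}. -/
theorem chi_substar_relations (a : ℕ → ℂ) (ha : ∀ n, 1 ≤ n → ‖a n‖ ≠ 1) :
    (∀ n : ℕ, 1 ≤ n →
      (rho a (2 * n) : ℂ) • chi a (2 * n) =
          conj (a (2 * n)) • chi a (2 * n - 1) + substar (chi a (2 * n - 1)) ∧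
      (rho a (2 * n) : ℂ) • substar (chi a (2 * n)) =
          chi a (2 * n - 1) + a (2 * n) • substar (chi a (2 * n - 1))) ∧
    (∀ n : ℕ, 1 ≤ n →
      chi a (2 * n - 1) =
          (-a (2 * n)) • substar (chi a (2 * n - 1)) +
            (rho a (2 * n) : ℂ) • substar (chi a (2 * n)) ∧
      chi a (2 * n) =
          (rhoh a (2 * n) : ℂ) • substar (chi a (2 * n - 1)) +
            conj (a (2 * n)) • substar (chi a (2 * n))) ∧
    (∀ n : ℕ,
      T 1 * substar (chi a (2 * n)) =
          (-a (2 * n + 1)) • chi a (2 * n) + (rho a (2 * n + 1) : ℂ) • chi a (2 * n + 1) ∧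
      T 1 * substar (chi a (2 * n + 1)) =
          (rhoh a (2 * n + 1) : ℂ) • chi a (2 * n) +
            conj (a (2 * n + 1)) • chi a (2 * n + 1)) := by
  refine ⟨fun n hn => ?_, fun n hn => ?_, fun n => ⟨main_iiia a ha n, main_iiib a ha n⟩⟩
  · obtain ⟨m, rfl⟩ : ∃ m, n = m + 1 := ⟨n - 1, by omega⟩
    rw [show 2 * (m + 1) - 1 = 2 * m + 1 from by omega]
    exact ⟨main_ia a ha m, main_ib a ha m⟩
  · obtain ⟨m, rfl⟩ : ∃ m, n = m + 1 := ⟨n - 1, by omega⟩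
    rw [show 2 * (m + 1) - 1 = 2 * m + 1 from by omega]
    exact ⟨main_iia a ha m, main_iib a ha m⟩
end
end

section
/- For every n ≥ 1 and every eigenvalue λ ∈ ℂ of the five-diagonal matrix ℱ_n, the geometric multiplicity of λ equals 1; that is, the kernel of λ·I_n − ℱ_n is one-dimensional. -/
open LaurentPolynomial Polynomial Complex ComplexConjugate

noncomputable section

namespace FGM


lemma one_sub_sq_ne (a : ℕ → ℂ) (m : ℕ) (h : ‖a m‖ ≠ 1) :
    1 - ‖a m‖ ^ 2 ≠ 0 := by
  intro h'
  have h2 : (‖a m‖ - 1) * (‖a m‖ + 1) = 0 := by linear_combination -h'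
  rcases mul_eq_zero.mp h2 with h3 | h3
  · exact h (by linarith)
  · have := norm_nonneg (a m); linarith

lemma rho_ne (a : ℕ → ℂ) (m : ℕ) (h : ‖a m‖ ≠ 1) : rho a m ≠ 0 := by
  have := one_sub_sq_ne a m h
  unfold rho
  rw [Real.sqrt_ne_zero']
  exact abs_pos.mpr this

lemma sign_mul_abs (x : ℝ) : Real.sign x * |x| = x := by
  rcases lt_trichotomy x 0 with h | h | h
  · rw [Real.sign_of_neg h, abs_of_neg h]; ring
  · simp [h]
  · rw [Real.sign_of_pos h, abs_of_pos h]; ring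

lemma rho_mul_rhoh (a : ℕ → ℂ) (m : ℕ) : rho a m * rhoh a m = 1 - ‖a m‖ ^ 2 := by
  unfold rhoh sgn
  rw [show rho a m * (Real.sign (1 - ‖a m‖ ^ 2) * rho a m)
      = Real.sign (1 - ‖a m‖ ^ 2) * (rho a m * rho a m) by ring]
  unfold rho
  rw [Real.mul_self_sqrt (abs_nonneg _), sign_mul_abs]

lemma key_id (a : ℕ → ℂ) (m : ℕ) :
    (rho a m : ℂ) * (rhoh a m : ℂ) = 1 - conj (a m) * a m := by
  have h1 : conj (a m) * a m = ((‖a m‖ ^ 2 : ℝ) : ℂ) := by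
    rw [show conj (a m) * a m = a m * conj (a m) by ring, Complex.mul_conj]
    norm_cast
    rw [Complex.sq_norm]
  rw [h1, ← Complex.ofReal_mul, rho_mul_rhoh]
  push_cast; ring



lemma Fent_band (a : ℕ → ℂ) (i j : ℕ) (h : j + 2 < i ∨ i + 2 < j) : Fent a i j = 0 := by
  unfold Fent
  split_ifs <;> first | rfl | (exfalso; omega)

def uext (n : ℕ) (v : Fin n → ℂ) (j : ℕ) : ℂ :=
  if h : 1 ≤ j ∧ j ≤ n then v ⟨j - 1, by omega⟩ else 0

lemma uext_zero {n : ℕ} {v : Fin n → ℂ} {j : ℕ} (h : j = 0 ∨ n < j) : uext n v j = 0 := by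
  unfold uext
  rw [dif_neg]
  omega

lemma uext_eq {n : ℕ} {v : Fin n → ℂ} {j : ℕ} (h1 : 1 ≤ j) (h2 : j ≤ n) :
    uext n v j = v ⟨j - 1, by omega⟩ := by
  unfold uext
  rw [dif_pos ⟨h1, h2⟩]

lemma rowEq (a : ℕ → ℂ) (n : ℕ) (lam : ℂ) (v : Fin n → ℂ)
    (hv : (Fmat a n).mulVec v = lam • v)
    (i0 : ℕ) (h1 : 1 ≤ i0) (h2 : i0 ≤ n) :
    ∑ j ∈ Finset.Icc (i0 - 2) (i0 + 2), Fent a i0 j * uext n v j = lam * uext n v i0 := by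
  have hrow : ∑ j : Fin n, Fent a i0 (j.val + 1) * v j = lam * v ⟨i0 - 1, by omega⟩ := by
    have h := congrFun hv ⟨i0 - 1, by omega⟩
    simp only [Matrix.mulVec, dotProduct, Pi.smul_apply, smul_eq_mul, Fmat,
      Matrix.of_apply] at h
    rw [show i0 - 1 + 1 = i0 from by omega] at h
    exact h
  have hfin : ∑ j : Fin n, Fent a i0 (j.val + 1) * v j
      = ∑ j ∈ Finset.Icc 1 n, Fent a i0 j * uext n v j := by
    apply Finset.sum_nbij' (fun (j : Fin n) => j.val + 1)
      (fun j => (⟨min (j - 1) (n - 1), by omega⟩ : Fin n))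
    · intro x _
      simp only [Finset.mem_Icc]
      omega
    · intro x _
      exact Finset.mem_univ _
    · intro x _
      ext
      simp only
      omega
    · intro x hx
      simp only [Finset.mem_Icc] at hx
      simp only
      omega
    · intro x _
      rw [uext_eq (by omega) (by omega)]
      have hfe : (⟨x.val + 1 - 1, by omega⟩ : Fin n) = x := by
        ext
        simp only
        omega
      rw [hfe]
  have big1 : ∑ j ∈ Finset.Icc 1 n, Fent a i0 j * uext n v j
      = ∑ j ∈ Finset.Icc 0 (n + 2), Fent a i0 j * uext n v j := by
    apply Finset.sum_subset
    · intro x hx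
      simp only [Finset.mem_Icc] at *
      omega
    · intro x hx hnx
      simp only [Finset.mem_Icc] at hx hnx
      rw [uext_zero (by omega), mul_zero]
  have big2 : ∑ j ∈ Finset.Icc (i0 - 2) (i0 + 2), Fent a i0 j * uext n v j
      = ∑ j ∈ Finset.Icc 0 (n + 2), Fent a i0 j * uext n v j := by
    apply Finset.sum_subset
    · intro x hx
      simp only [Finset.mem_Icc] at *
      omega
    · intro x hx hnx
      simp only [Finset.mem_Icc] at hx hnx
      rw [Fent_band a i0 x (by omega), zero_mul]
  rw [big2, ← big1, ← hfin, hrow, uext_eq h1 h2]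

lemma sum_Icc_five (f : ℕ → ℂ) (m : ℕ) :
    ∑ j ∈ Finset.Icc m (m + 4), f j
      = f m + f (m + 1) + f (m + 2) + f (m + 3) + f (m + 4) := by
  rw [show m + 4 = m + 3 + 1 from rfl, Finset.sum_Icc_succ_top (by omega),
    show m + 3 = m + 2 + 1 from rfl, Finset.sum_Icc_succ_top (by omega),
    show m + 2 = m + 1 + 1 from rfl, Finset.sum_Icc_succ_top (by omega),
    Finset.sum_Icc_succ_top (by omega), Finset.Icc_self, Finset.sum_singleton]

lemma row1 (a : ℕ → ℂ) (n : ℕ) (lam : ℂ) (v : Fin n → ℂ)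
    (hv : (Fmat a n).mulVec v = lam • v) (hn : 1 ≤ n) :
    -(a 1) * uext n v 1 + (rho a 1 : ℂ) * uext n v 2 = lam * uext n v 1 := by
  have h := rowEq a n lam v hv 1 le_rfl hn
  rw [show (1 : ℕ) - 2 = 0 from rfl, show (1 : ℕ) + 2 = 3 from rfl] at h
  rw [show Finset.Icc (0 : ℕ) 3 = Finset.range 4 from by
      ext x; simp [Finset.mem_Icc, Finset.mem_range]; omega] at h
  rw [Finset.sum_range_succ, Finset.sum_range_succ, Finset.sum_range_succ,
    Finset.sum_range_one] at h
  norm_num [Fent] at h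
  linear_combination h

lemma rowE (a : ℕ → ℂ) (n : ℕ) (lam : ℂ) (v : Fin n → ℂ)
    (hv : (Fmat a n).mulVec v = lam • v) (K : ℕ) (hK : 2 * K + 2 ≤ n) :
    -(rhoh a (2 * K + 1) : ℂ) * a (2 * K + 2) * uext n v (2 * K + 1)
      + -conj (a (2 * K + 1)) * a (2 * K + 2) * uext n v (2 * K + 2)
      + -(rho a (2 * K + 2) : ℂ) * a (2 * K + 3) * uext n v (2 * K + 3)
      + (rho a (2 * K + 2) : ℂ) * (rho a (2 * K + 3) : ℂ) * uext n v (2 * K + 4)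
      = lam * uext n v (2 * K + 2) := by
  have h := rowEq a n lam v hv (2 * K + 2) (by omega) hK
  rw [show 2 * K + 2 - 2 = 2 * K from rfl, show 2 * K + 2 + 2 = 2 * K + 4 from rfl,
    sum_Icc_five] at h
  have e0 : Fent a (2 * K + 2) (2 * K) = 0 := by
    unfold Fent; split_ifs <;> first | rfl | (exfalso; omega)
  have e1 : Fent a (2 * K + 2) (2 * K + 1) = -(rhoh a (2 * K + 1) : ℂ) * a (2 * K + 2) := by
    unfold Fent; split_ifs <;> first | rfl | (exfalso; omega)
  have e2 : Fent a (2 * K + 2) (2 * K + 2) = -conj (a (2 * K + 1)) * a (2 * K + 2) := by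
    unfold Fent; split_ifs <;> first | rfl | (exfalso; omega)
  have e3 : Fent a (2 * K + 2) (2 * K + 3) = -(rho a (2 * K + 2) : ℂ) * a (2 * K + 3) := by
    unfold Fent; split_ifs <;> first | rfl | (exfalso; omega)
  have e4 : Fent a (2 * K + 2) (2 * K + 4)
      = (rho a (2 * K + 2) : ℂ) * (rho a (2 * K + 3) : ℂ) := by
    unfold Fent; split_ifs <;> first | rfl | (exfalso; omega)
  rw [e0, e1, e2, e3, e4] at h
  linear_combination h

lemma rowO (a : ℕ → ℂ) (n : ℕ) (lam : ℂ) (v : Fin n → ℂ)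
    (hv : (Fmat a n).mulVec v = lam • v) (K : ℕ) (hK : 2 * K + 3 ≤ n) :
    (rhoh a (2 * K + 1) : ℂ) * (rhoh a (2 * K + 2) : ℂ) * uext n v (2 * K + 1)
      + conj (a (2 * K + 1)) * (rhoh a (2 * K + 2) : ℂ) * uext n v (2 * K + 2)
      + -conj (a (2 * K + 2)) * a (2 * K + 3) * uext n v (2 * K + 3)
      + conj (a (2 * K + 2)) * (rho a (2 * K + 3) : ℂ) * uext n v (2 * K + 4)
      = lam * uext n v (2 * K + 3) := by
  have h := rowEq a n lam v hv (2 * K + 3) (by omega) hK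
  rw [show 2 * K + 3 - 2 = 2 * K + 1 from rfl, show 2 * K + 3 + 2 = 2 * K + 1 + 4 from rfl,
    sum_Icc_five] at h
  have e0 : Fent a (2 * K + 3) (2 * K + 1)
      = (rhoh a (2 * K + 1) : ℂ) * (rhoh a (2 * K + 2) : ℂ) := by
    unfold Fent; split_ifs <;> first | rfl | (exfalso; omega)
  have e1 : Fent a (2 * K + 3) (2 * K + 2)
      = conj (a (2 * K + 1)) * (rhoh a (2 * K + 2) : ℂ) := by
    unfold Fent; split_ifs <;> first | rfl | (exfalso; omega)
  have e2 : Fent a (2 * K + 3) (2 * K + 3) = -conj (a (2 * K + 2)) * a (2 * K + 3) := by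
    unfold Fent; split_ifs <;> first | rfl | (exfalso; omega)
  have e3 : Fent a (2 * K + 3) (2 * K + 4)
      = conj (a (2 * K + 2)) * (rho a (2 * K + 3) : ℂ) := by
    unfold Fent; split_ifs <;> first | rfl | (exfalso; omega)
  have e4 : Fent a (2 * K + 3) (2 * K + 5) = 0 := by
    unfold Fent; split_ifs <;> first | rfl | (exfalso; omega)
  rw [e0, e1, e2, e3, e4] at h
  linear_combination h

lemma rhone (a : ℕ → ℂ) (ha : ∀ m, 1 ≤ m → ‖a m‖ ≠ 1) (m : ℕ) (hm : 1 ≤ m) :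
    (rho a m : ℂ) ≠ 0 :=
  Complex.ofReal_ne_zero.mpr (rho_ne a m (ha m hm))

lemma vanish_ne (a : ℕ → ℂ) (ha : ∀ m, 1 ≤ m → ‖a m‖ ≠ 1)
    (n : ℕ) (hn : 1 ≤ n) (lam : ℂ) (hl : lam ≠ 0) (v : Fin n → ℂ)
    (hv : (Fmat a n).mulVec v = lam • v) (h1 : uext n v 1 = 0) :
    ∀ j, uext n v j = 0 := by
  have H : ∀ K, uext n v (2 * K + 1) = 0 ∧ uext n v (2 * K + 2) = 0 := by
    intro K
    induction K with
    | zero =>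
      refine ⟨h1, ?_⟩
      have hr1 := row1 a n lam v hv hn
      rw [h1] at hr1
      have h2 : (rho a 1 : ℂ) * uext n v 2 = 0 := by linear_combination hr1
      exact (mul_eq_zero.mp h2).resolve_left (rhone a ha 1 le_rfl)
    | succ K ih =>
      rw [show 2 * (K + 1) + 1 = 2 * K + 3 from by ring,
        show 2 * (K + 1) + 2 = 2 * K + 4 from by ring]
      by_cases hcase : 2 * K + 3 ≤ n
      · have hE := rowE a n lam v hv K (by omega)
        have hO := rowO a n lam v hv K hcase
        rw [ih.1, ih.2] at hE hO
        have hQ : (rho a (2 * K + 2) : ℂ) * (-(a (2 * K + 3)) * uext n v (2 * K + 3)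
            + (rho a (2 * K + 3) : ℂ) * uext n v (2 * K + 4)) = 0 := by
          linear_combination hE
        have hQ0 : -(a (2 * K + 3)) * uext n v (2 * K + 3)
            + (rho a (2 * K + 3) : ℂ) * uext n v (2 * K + 4) = 0 :=
          (mul_eq_zero.mp hQ).resolve_left (rhone a ha (2 * K + 2) (by omega))
        have h3 : lam * uext n v (2 * K + 3) = 0 := by
          linear_combination (-1 : ℂ) * hO + conj (a (2 * K + 2)) * hQ0
        have hu3 : uext n v (2 * K + 3) = 0 := (mul_eq_zero.mp h3).resolve_left hl
        have h4 : (rho a (2 * K + 3) : ℂ) * uext n v (2 * K + 4) = 0 := by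
          linear_combination hQ0 + a (2 * K + 3) * hu3
        exact ⟨hu3, (mul_eq_zero.mp h4).resolve_left (rhone a ha (2 * K + 3) (by omega))⟩
      · exact ⟨uext_zero (by omega), uext_zero (by omega)⟩
  intro j
  by_cases hj : 1 ≤ j
  · rcases Nat.even_or_odd j with ⟨K, hK⟩ | ⟨K, hK⟩
    · have hj1 : j = 2 * (K - 1) + 2 := by omega
      rw [hj1]
      exact (H (K - 1)).2
    · have hj1 : j = 2 * K + 1 := by omega
      rw [hj1]
      exact (H K).1
  · exact uext_zero (by omega)

lemma vanish_zero (a : ℕ → ℂ) (ha : ∀ m, 1 ≤ m → ‖a m‖ ≠ 1)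
    (n : ℕ) (hn : 1 ≤ n) (v : Fin n → ℂ)
    (hv : (Fmat a n).mulVec v = (0 : ℂ) • v) (h1 : uext n v (2 * ((n - 1) / 2) + 1) = 0) :
    ∀ j, uext n v j = 0 := by
  have hT : ∀ K, 2 * K + 1 ≤ n → -(a (2 * K + 1)) * uext n v (2 * K + 1)
      + (rho a (2 * K + 1) : ℂ) * uext n v (2 * K + 2) = 0 := by
    intro K hK
    cases K with
    | zero =>
      have hr1 := row1 a n 0 v hv hn
      simpa using hr1
    | succ K' =>
      have hE := rowE a n 0 v hv K' (by omega)
      have hO := rowO a n 0 v hv K' (by omega)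
      have hid := key_id a (2 * K' + 2)
      rw [show 2 * (K' + 1) + 1 = 2 * K' + 3 from by ring,
        show 2 * (K' + 1) + 2 = 2 * K' + 4 from by ring]
      linear_combination (rhoh a (2 * K' + 2) : ℂ) * hE + (a (2 * K' + 2)) * hO
        - (-(a (2 * K' + 3)) * uext n v (2 * K' + 3)
            + (rho a (2 * K' + 3) : ℂ) * uext n v (2 * K' + 4)) * hid
  have hS : ∀ K, 2 * K + 3 ≤ n → (rhoh a (2 * K + 1) : ℂ) * uext n v (2 * K + 1)
      + conj (a (2 * K + 1)) * uext n v (2 * K + 2) = 0 := by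
    intro K hK
    have hE := rowE a n 0 v hv K (by omega)
    have hO := rowO a n 0 v hv K hK
    have hid := key_id a (2 * K + 2)
    linear_combination (-(conj (a (2 * K + 2)))) * hE + (rho a (2 * K + 2) : ℂ) * hO
      - ((rhoh a (2 * K + 1) : ℂ) * uext n v (2 * K + 1)
          + conj (a (2 * K + 1)) * uext n v (2 * K + 2)) * hid
  have pair : ∀ K, 2 * K + 3 ≤ n → uext n v (2 * K + 1) = 0 ∧ uext n v (2 * K + 2) = 0 := by
    intro K hK
    have ht := hT K (by omega)
    have hs := hS K hK
    have hid := key_id a (2 * K + 1)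
    have hu1 : uext n v (2 * K + 1) = 0 := by
      linear_combination (rho a (2 * K + 1) : ℂ) * hs - conj (a (2 * K + 1)) * ht
        - uext n v (2 * K + 1) * hid
    have hu2 : (rho a (2 * K + 1) : ℂ) * uext n v (2 * K + 2) = 0 := by
      linear_combination ht + a (2 * K + 1) * hu1
    exact ⟨hu1, (mul_eq_zero.mp hu2).resolve_left (rhone a ha (2 * K + 1) (by omega))⟩
  intro j
  by_cases hj0 : 1 ≤ j ∧ j ≤ n
  · obtain ⟨hj1, hj2⟩ := hj0
    set K := (j - 1) / 2 with hKdef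
    have hjk : j = 2 * K + 1 ∨ j = 2 * K + 2 := by omega
    by_cases hK3 : 2 * K + 3 ≤ n
    · rcases hjk with h | h <;> rw [h]
      exacts [(pair K hK3).1, (pair K hK3).2]
    · have hMK : 2 * ((n - 1) / 2) + 1 = 2 * K + 1 := by omega
      rw [hMK] at h1
      rcases hjk with h | h <;> rw [h]
      · exact h1
      · have ht := hT K (by omega)
        have hu2 : (rho a (2 * K + 1) : ℂ) * uext n v (2 * K + 2) = 0 := by
          linear_combination ht + a (2 * K + 1) * h1
        exact (mul_eq_zero.mp hu2).resolve_left (rhone a ha (2 * K + 1) (by omega))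
  · exact uext_zero (by omega)

lemma finrank_ker_eq_one {n : ℕ} (A : Matrix (Fin n) (Fin n) ℂ) (v : Fin n → ℂ)
    (hv0 : v ≠ 0) (hvker : A.mulVecLin v = 0) (i0 : Fin n)
    (hinj : ∀ w : Fin n → ℂ, A.mulVecLin w = 0 → w i0 = 0 → w = 0) :
    Module.finrank ℂ (LinearMap.ker A.mulVecLin) = 1 := by
  have hge : 0 < Module.finrank ℂ ↥(LinearMap.ker A.mulVecLin) := by
    rw [Module.finrank_pos_iff_exists_ne_zero]
    refine ⟨⟨v, by rwa [LinearMap.mem_ker]⟩, ?_⟩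
    intro h
    exact hv0 (by simpa using congrArg Subtype.val h)
  have hle : Module.finrank ℂ ↥(LinearMap.ker A.mulVecLin) ≤ 1 := by
    have hf : Function.Injective ((LinearMap.proj i0 : ((Fin n) → ℂ) →ₗ[ℂ] ℂ).comp
        (LinearMap.ker A.mulVecLin).subtype) := by
      rw [← LinearMap.ker_eq_bot, LinearMap.ker_eq_bot']
      intro m hm
      have hm0 : (m : Fin n → ℂ) i0 = 0 := hm
      have hmk : A.mulVecLin (m : Fin n → ℂ) = 0 := m.2
      exact Subtype.ext (hinj _ hmk hm0)
    calc Module.finrank ℂ ↥(LinearMap.ker A.mulVecLin) ≤ Module.finrank ℂ ℂ :=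
          LinearMap.finrank_le_finrank_of_injective hf
      _ = 1 := Module.finrank_self ℂ
  omega


end FGM

/-- Theorem 3.1 (ii): every eigenvalue of the five-diagonal matrix ℱ_n
has geometric multiplicity 1, i.e. ker(λ I_n − ℱ_n) is one-dimensional. -/
theorem Fmat_geometric_multiplicity_one
    (a : ℕ → ℂ) (ha : ∀ n, 1 ≤ n → ‖a n‖ ≠ 1)
    (n : ℕ) (hn : 1 ≤ n) (lam : ℂ)
    (hev : ∃ v : Fin n → ℂ, v ≠ 0 ∧ (Fmat a n).mulVec v = lam • v) :
    Module.finrank ℂ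
      (LinearMap.ker (Matrix.mulVecLin (lam • (1 : Matrix (Fin n) (Fin n) ℂ) - Fmat a n)))
      = 1 := by
  classical
  obtain ⟨v, hv0, hv⟩ := hev
  have hkerA : ∀ w : Fin n → ℂ,
      (lam • (1 : Matrix (Fin n) (Fin n) ℂ) - Fmat a n).mulVecLin w = 0
        ↔ (Fmat a n).mulVec w = lam • w := by
    intro w
    rw [Matrix.mulVecLin_apply, Matrix.sub_mulVec, Matrix.smul_mulVec,
      Matrix.one_mulVec, sub_eq_zero]
    exact eq_comm
  have hwzero : ∀ (w : Fin n → ℂ), (∀ j, FGM.uext n w j = 0) → w = 0 := by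
    intro w hall
    funext i
    have h := hall (i.val + 1)
    rw [FGM.uext_eq (by omega) (by omega)] at h
    have he : (⟨i.val + 1 - 1, by omega⟩ : Fin n) = i := by
      ext
      simp only
      omega
    rw [he] at h
    simpa using h
  by_cases hl : lam = 0
  · apply FGM.finrank_ker_eq_one _ v hv0 ((hkerA v).mpr hv) ⟨2 * ((n - 1) / 2), by omega⟩
    intro w hw h0
    apply hwzero
    apply FGM.vanish_zero a ha n hn w (by rw [← hl]; exact (hkerA w).mp hw)
    rw [FGM.uext_eq (by omega) (by omega)]
    have he : (⟨2 * ((n - 1) / 2) + 1 - 1, by omega⟩ : Fin n)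
        = ⟨2 * ((n - 1) / 2), by omega⟩ := by
      ext
      simp only
      omega
    rw [he]
    exact h0
  · apply FGM.finrank_ker_eq_one _ v hv0 ((hkerA v).mpr hv) ⟨0, by omega⟩
    intro w hw h0
    apply hwzero
    apply FGM.vanish_ne a ha n hn lam hl w ((hkerA w).mp hw)
    rw [FGM.uext_eq (by omega) hn]
    exact h0
end
end

section
/- For j ≥ 1 let Θ_j be the 2×2 matrix with rows (−a_j, ρ_j) and (ρ̂_j, conj(a_j)). Let ℱ^{(1)} be the infinite block-diagonal matrix diag(Θ_1, Θ_3, Θ_5, …) and ℱ^{(2)} the infinite block-diagonal matrix diag(1, Θ_2, Θ_4, …) (the first block of ℱ^{(2)} being the 1×1 block (1)), and let ℱ^{(1)}_n, ℱ^{(2)}_n denote their n×n principal submatrices. Then for every n ≥ 1 the five-diagonal matrix factors as ℱ_n = ℱ^{(2)}_n · ℱ^{(1)}_n. Moreover, ℱ^{(1)}_n · conj(ℱ^{(1)}_n) = I_n whenever n is even, and ℱ^{(2)}_n · conj(ℱ^{(2)}_n) = I_n whenever n is odd, where conj denotes entrywise complex conjugation. -/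
open LaurentPolynomial Polynomial Complex ComplexConjugate

noncomputable section

/-- Entries (1-indexed) of the infinite block-diagonal matrix ℱ^{(1)} = diag(Θ₁, Θ₃, …),
where Θ_j has rows (−a_j, ρ_j) and (ρ̂_j, conj a_j). -/
def F1ent (a : ℕ → ℂ) (i j : ℕ) : ℂ :=
  if i % 2 = 1 then
    if j = i then -a i else if j = i + 1 then (rho a i : ℂ) else 0
  else
    if j + 1 = i then (rhoh a (i - 1) : ℂ) else if j = i then conj (a (i - 1)) else 0

/-- Entries (1-indexed) of the infinite block-diagonal matrix ℱ^{(2)} = diag(1, Θ₂, Θ₄, …). -/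
def F2ent (a : ℕ → ℂ) (i j : ℕ) : ℂ :=
  if i = 1 then (if j = 1 then 1 else 0)
  else if i % 2 = 0 then
    if j = i then -a i else if j = i + 1 then (rho a i : ℂ) else 0
  else
    if j + 1 = i then (rhoh a (i - 1) : ℂ) else if j = i then conj (a (i - 1)) else 0

/-- n×n principal submatrix of ℱ^{(1)}. -/
def F1mat (a : ℕ → ℂ) (n : ℕ) : Matrix (Fin n) (Fin n) ℂ :=
  Matrix.of fun i j => F1ent a (i.val + 1) (j.val + 1)

/-- n×n principal submatrix of ℱ^{(2)}. -/
def F2mat (a : ℕ → ℂ) (n : ℕ) : Matrix (Fin n) (Fin n) ℂ :=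
  Matrix.of fun i j => F2ent a (i.val + 1) (j.val + 1)


/-- Auxiliary: start column of the nonzero 2-block in row `i` of `F1ent`. -/
def p1 (i : ℕ) : ℕ := if i % 2 = 1 then i else i - 1

def u1 (a : ℕ → ℂ) (i : ℕ) : ℂ := if i % 2 = 1 then -a i else (rhoh a (i - 1) : ℂ)

def v1 (a : ℕ → ℂ) (i : ℕ) : ℂ := if i % 2 = 1 then (rho a i : ℂ) else conj (a (i - 1))

/-- Auxiliary: start column of the nonzero 2-block in row `i` of `F2ent`. -/
def p2 (i : ℕ) : ℕ := if i = 1 then 1 else if i % 2 = 0 then i else i - 1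

def u2 (a : ℕ → ℂ) (i : ℕ) : ℂ :=
  if i = 1 then 1 else if i % 2 = 0 then -a i else (rhoh a (i - 1) : ℂ)

def v2 (a : ℕ → ℂ) (i : ℕ) : ℂ :=
  if i = 1 then 0 else if i % 2 = 0 then (rho a i : ℂ) else conj (a (i - 1))

lemma p1_pos (i : ℕ) (hi : 1 ≤ i) : 1 ≤ p1 i := by unfold p1; split_ifs <;> omega

lemma p1_le (i : ℕ) : p1 i ≤ i := by unfold p1; split_ifs <;> omega

lemma p1_odd (i : ℕ) (hi : 1 ≤ i) : p1 i % 2 = 1 := by unfold p1; split_ifs <;> omega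

lemma p2_pos (i : ℕ) (hi : 1 ≤ i) : 1 ≤ p2 i := by unfold p2; split_ifs <;> omega

lemma p2_le (i : ℕ) : p2 i ≤ i := by unfold p2; split_ifs <;> omega

lemma F1row (a : ℕ → ℂ) (i k : ℕ) (hi : 1 ≤ i) :
    F1ent a i k = if k = p1 i then u1 a i else if k = p1 i + 1 then v1 a i else 0 := by
  unfold F1ent p1 u1 v1
  split_ifs <;> first | rfl | omega

lemma F2row (a : ℕ → ℂ) (i k : ℕ) (hi : 1 ≤ i) :
    F2ent a i k = if k = p2 i then u2 a i else if k = p2 i + 1 then v2 a i else 0 := by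
  unfold F2ent p2 u2 v2
  split_ifs <;> first | rfl | omega

lemma fin_sum_shift_ite (n p : ℕ) (hp : 1 ≤ p) (c : ℂ) :
    (∑ k : Fin n, if (k : ℕ) + 1 = p then c else 0) = if p ≤ n then c else 0 := by
  rw [Fin.sum_univ_eq_sum_range (fun k => if k + 1 = p then c else 0) n]
  have h : ∀ k ∈ Finset.range n,
      ((if k + 1 = p then c else 0) : ℂ) = if k = p - 1 then c else 0 := by
    intro k _
    split_ifs <;> first | rfl | omega
  rw [Finset.sum_congr rfl h, Finset.sum_ite_eq' (Finset.range n) (p - 1) (fun _ => c)]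
  simp only [Finset.mem_range]
  split_ifs <;> first | rfl | omega

lemma sum_row (n p : ℕ) (hp : 1 ≤ p) (u v : ℂ) (f g : ℕ → ℂ)
    (hf : ∀ k, f k = if k = p then u else if k = p + 1 then v else 0) :
    (∑ k : Fin n, f ((k : ℕ) + 1) * g ((k : ℕ) + 1))
      = (if p ≤ n then u * g p else 0) + (if p + 1 ≤ n then v * g (p + 1) else 0) := by
  have h : ∀ k : Fin n, f ((k : ℕ) + 1) * g ((k : ℕ) + 1)
      = (if (k : ℕ) + 1 = p then u * g p else 0)
        + (if (k : ℕ) + 1 = p + 1 then v * g (p + 1) else 0) := by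
    intro k
    rw [hf]
    by_cases h1 : (k : ℕ) + 1 = p
    · rw [if_pos h1, if_pos h1, if_neg (by omega : ¬(k : ℕ) + 1 = p + 1), h1, add_zero]
    · rw [if_neg h1, if_neg h1]
      by_cases h2 : (k : ℕ) + 1 = p + 1
      · rw [if_pos h2, if_pos h2, h2, zero_add]
      · rw [if_neg h2, if_neg h2, zero_mul, add_zero]
  rw [Finset.sum_congr rfl (fun k _ => h k), Finset.sum_add_distrib,
    fin_sum_shift_ite n p hp, fin_sum_shift_ite n (p + 1) (by omega)]

lemma rr (a : ℕ → ℂ) (m : ℕ) :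
    ((rho a m : ℝ) : ℂ) * ((rhoh a m : ℝ) : ℂ) = 1 - a m * conj (a m) := by
  have hsgn : ∀ x : ℝ, Real.sign x * |x| = x := by
    intro x
    rcases lt_trichotomy x 0 with h | h | h
    · rw [Real.sign_of_neg h, abs_of_neg h]; ring
    · simp [h]
    · rw [Real.sign_of_pos h, abs_of_pos h]; ring
  have h2 : rho a m * rho a m = |1 - ‖a m‖ ^ 2| :=
    Real.mul_self_sqrt (abs_nonneg _)
  have h1 : rho a m * rhoh a m = 1 - ‖a m‖ ^ 2 := by
    calc rho a m * rhoh a m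
        = Real.sign (1 - ‖a m‖ ^ 2) * (rho a m * rho a m) := by
          rw [rhoh, sgn]; ring
      _ = 1 - ‖a m‖ ^ 2 := by rw [h2]; exact hsgn _
  calc ((rho a m : ℝ) : ℂ) * ((rhoh a m : ℝ) : ℂ)
      = ((rho a m * rhoh a m : ℝ) : ℂ) := by push_cast; ring
    _ = ((1 - ‖a m‖ ^ 2 : ℝ) : ℂ) := by rw [h1]
    _ = 1 - a m * conj (a m) := by
        rw [Complex.mul_conj, ← Complex.sq_norm]
        push_cast
        ring

set_option maxHeartbeats 3200000 in
lemma keyF (a : ℕ → ℂ) (I J : ℕ) (hI : 1 ≤ I) (hJ : 1 ≤ J) :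
    u2 a I * F1ent a (p2 I) J + v2 a I * F1ent a (p2 I + 1) J = Fent a I J := by
  unfold u2 v2 p2 F1ent Fent
  split_ifs <;>
    first
      | (exfalso; omega)
      | ring1
      | (simp only [show I - 1 + 1 = I from by omega, show 1 + (I - 1) = I from by omega,
          Nat.add_sub_cancel, Nat.sub_sub,
          Nat.reduceAdd, show I - 1 - 1 = I - 2 from by omega]; ring1)

set_option maxHeartbeats 3200000 in
lemma keyU1 (a : ℕ → ℂ) (I J : ℕ) (hI : 1 ≤ I) (hJ : 1 ≤ J) :
    u1 a I * conj (F1ent a (p1 I) J) + v1 a I * conj (F1ent a (p1 I + 1) J)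
      = if I = J then 1 else 0 := by
  unfold u1 v1 p1 F1ent
  split_ifs <;>
    first
      | (exfalso; omega)
      | (simp only [map_neg, map_zero, Complex.conj_ofReal, Complex.conj_conj,
          Nat.add_sub_cancel, Nat.sub_sub, Nat.reduceAdd,
          show I - 1 + 1 = I from by omega, show 1 + (I - 1) = I from by omega,
          show I - 1 - 1 = I - 2 from by omega] <;>
          first
            | ring1
            | linear_combination rr a I
            | linear_combination rr a (I - 1))

set_option maxHeartbeats 3200000 in
lemma keyU2 (a : ℕ → ℂ) (I J : ℕ) (hI : 1 ≤ I) (hJ : 1 ≤ J) :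
    u2 a I * conj (F2ent a (p2 I) J) + v2 a I * conj (F2ent a (p2 I + 1) J)
      = if I = J then 1 else 0 := by
  unfold u2 v2 p2 F2ent
  split_ifs <;>
    first
      | (exfalso; omega)
      | (simp only [map_neg, map_zero, map_one, Complex.conj_ofReal, Complex.conj_conj,
          Nat.add_sub_cancel, Nat.sub_sub, Nat.reduceAdd,
          show I - 1 + 1 = I from by omega, show 1 + (I - 1) = I from by omega,
          show I - 1 - 1 = I - 2 from by omega] <;>
          first
            | ring1
            | linear_combination rr a I
            | linear_combination rr a (I - 1))

/-- the five-diagonal matrix factors as ℱ_n = ℱ^{(2)}_n ℱ^{(1)}_n; moreover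
ℱ^{(1)}_n conj(ℱ^{(1)}_n) = I_n for even n and ℱ^{(2)}_n conj(ℱ^{(2)}_n) = I_n for odd n. -/
theorem Fmat_factorization
    (a : ℕ → ℂ) (ha : ∀ n, 1 ≤ n → ‖a n‖ ≠ 1)
    (n : ℕ) (hn : 1 ≤ n) :
    Fmat a n = F2mat a n * F1mat a n ∧
    (Even n → F1mat a n * (F1mat a n).map (starRingEnd ℂ) = 1) ∧
    (Odd n → F2mat a n * (F2mat a n).map (starRingEnd ℂ) = 1) := by
  refine ⟨?_, ?_, ?_⟩
  · ext i j
    set I := (i : ℕ) + 1 with hIdef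
    set J := (j : ℕ) + 1 with hJdef
    have hI : 1 ≤ I := by omega
    have hJ : 1 ≤ J := by omega
    have hIn : I ≤ n := by omega
    have hJn : J ≤ n := by omega
    have hm : (F2mat a n * F1mat a n) i j
        = ∑ k : Fin n, F2ent a I ((k : ℕ) + 1) * F1ent a ((k : ℕ) + 1) J := by
      rw [Matrix.mul_apply]; rfl
    rw [show (Fmat a n) i j = Fent a I J from rfl, hm,
      sum_row n (p2 I) (p2_pos I hI) (u2 a I) (v2 a I) (F2ent a I) (fun k => F1ent a k J)
        (fun k => F2row a I k hI)]
    rw [if_pos (le_trans (p2_le I) hIn)]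
    have hB : (if p2 I + 1 ≤ n then v2 a I * F1ent a (p2 I + 1) J else 0)
        = v2 a I * F1ent a (p2 I + 1) J := by
      split_ifs with h
      · rfl
      · rcases eq_or_ne I 1 with h1 | h1
        · simp [v2, h1]
        · have hIe : I % 2 = 0 := by
            by_contra hodd
            have : p2 I = I - 1 := by simp [p2, h1, hodd]
            have := p2_le I
            omega
          have hp : p2 I = I := by simp [p2, h1, hIe]
          have hz : F1ent a (p2 I + 1) J = 0 := by
            rw [hp]
            unfold F1ent
            rw [if_pos (by omega : (I + 1) % 2 = 1), if_neg (by omega), if_neg (by omega)]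
          rw [hz, mul_zero]
    rw [hB]
    exact (keyF a I J hI hJ).symm
  · intro hne
    ext i j
    set I := (i : ℕ) + 1 with hIdef
    set J := (j : ℕ) + 1 with hJdef
    have hI : 1 ≤ I := by omega
    have hJ : 1 ≤ J := by omega
    have hIn : I ≤ n := by omega
    have hm : (F1mat a n * (F1mat a n).map (starRingEnd ℂ)) i j
        = ∑ k : Fin n, F1ent a I ((k : ℕ) + 1) * conj (F1ent a ((k : ℕ) + 1) J) := by
      rw [Matrix.mul_apply]; rfl
    have hne2 : n % 2 = 0 := by
      rcases hne with ⟨m, hm2⟩; omega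
    rw [hm, sum_row n (p1 I) (p1_pos I hI) (u1 a I) (v1 a I) (F1ent a I)
        (fun k => conj (F1ent a k J)) (fun k => F1row a I k hI)]
    have hpo := p1_odd I hI
    have hpl := p1_le I
    rw [if_pos (by omega), if_pos (by omega), keyU1 a I J hI hJ, Matrix.one_apply]
    congr 1
    simp only [eq_iff_iff]
    constructor
    · intro h; exact Fin.ext (by omega)
    · intro h; rw [hIdef, hJdef, h]
  · intro hno
    ext i j
    set I := (i : ℕ) + 1 with hIdef
    set J := (j : ℕ) + 1 with hJdef
    have hI : 1 ≤ I := by omega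
    have hJ : 1 ≤ J := by omega
    have hIn : I ≤ n := by omega
    have hJn : J ≤ n := by omega
    have hno2 : n % 2 = 1 := by
      rcases hno with ⟨m, hm2⟩; omega
    have hm : (F2mat a n * (F2mat a n).map (starRingEnd ℂ)) i j
        = ∑ k : Fin n, F2ent a I ((k : ℕ) + 1) * conj (F2ent a ((k : ℕ) + 1) J) := by
      rw [Matrix.mul_apply]; rfl
    rw [hm, sum_row n (p2 I) (p2_pos I hI) (u2 a I) (v2 a I) (F2ent a I)
        (fun k => conj (F2ent a k J)) (fun k => F2row a I k hI)]
    have hpl := p2_le I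
    rw [if_pos (by omega)]
    have hB : (if p2 I + 1 ≤ n then v2 a I * conj (F2ent a (p2 I + 1) J) else 0)
        = v2 a I * conj (F2ent a (p2 I + 1) J) := by
      split_ifs with h
      · rfl
      · have h1 : I = 1 := by
          by_contra h1
          rcases Nat.even_or_odd I with he | ho
          · have he2 : I % 2 = 0 := Nat.even_iff.mp he
            have : p2 I = I := by simp [p2, h1, he2]
            omega
          · have ho2 : I % 2 = 1 := Nat.odd_iff.mp ho
            have : p2 I = I - 1 := by
              simp [p2, h1, ho2]
            omega
        simp [v2, h1]
    rw [hB, keyU2 a I J hI hJ, Matrix.one_apply]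
    congr 1
    simp only [eq_iff_iff]
    constructor
    · intro h; exact Fin.ext (by omega)
    · intro h; rw [hIdef, hJdef, h]
end
end
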